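/- Let R be a ring. The class GP^⊥ = {M : Ext^1_R(X, M) = 0 for all Gorenstein projective X} is thick: it is closed under direct summands, and for every short exact sequence 0 → M' → M → M'' → 0 of R-modules, if two of the three modules lie in GP^⊥ then so does the third. -/

import Mathlib

open CategoryTheory Opposite

universe u

variable {R : Type u} [Ring R]

/-- A chain complex of modules is totally acyclic if all its terms are projective, it is
exact, and applying `Hom(-, Q)` gives an exact complex for every projective module `Q`. -/
def IsTotallyAcyclic {R : Type u} [Ring R] (P : ChainComplex (ModuleCat.{u} R) ℤ) : Prop :=
  (∀ i, Projective (P.X i)) ∧ (∀ i, P.ExactAt i) ∧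
    (∀ Q : ModuleCat.{u} R, Projective Q → ∀ i,
      ((((preadditiveYoneda.obj Q).mapHomologicalComplex _).obj P.op).ExactAt i))

/-- A module is Gorenstein projective if it is a kernel (cycle) in a totally acyclic
complex of projectives. -/
def IsGorensteinProjective {R : Type u} [Ring R] (M : ModuleCat.{u} R) : Prop :=
  ∃ P : ChainComplex (ModuleCat.{u} R) ℤ, IsTotallyAcyclic P ∧ Nonempty (M ≅ P.cycles 0)

/-- Vanishing of `Ext^n_R(X, M)` (as an abelian group). -/
abbrev extVanishes (n : ℕ) (X M : ModuleCat.{u} R) : Prop :=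
  Subsingleton (((Ext ℤ (ModuleCat.{u} R) n).obj (op X)).obj M)

/-- Membership in the right `Ext^1`-orthogonal `GP^⊥` of the Gorenstein projectives. -/
def MemGPperp (M : ModuleCat.{u} R) : Prop :=
  ∀ X : ModuleCat.{u} R, IsGorensteinProjective X → extVanishes 1 X M

/-! ### Auxiliary infrastructure -/

section Aux

open CategoryTheory Limits

lemma downZ_rel (a b : ℤ) (h : b + 1 = a) : (ComplexShape.down ℤ).Rel a b := h
lemma downZ_prev (j : ℤ) : (ComplexShape.down ℤ).prev j = j+1 :=
  (ComplexShape.down ℤ).prev_eq' (downZ_rel _ _ rfl)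
lemma downZ_next (j : ℤ) : (ComplexShape.down ℤ).next j = j-1 :=
  (ComplexShape.down ℤ).next_eq' (downZ_rel _ _ (by omega))
lemma upN_rel (a b : ℕ) (h : a + 1 = b) : (ComplexShape.up ℕ).Rel a b := h

lemma d_congr {C : Type*} [Category C] [Preadditive C] {c : ComplexShape ℤ}
    (P : HomologicalComplex C c) {a a' b b' : ℤ} (ha : a = a') (hb : b = b') :
    P.d a b = eqToHom (by rw [ha]) ≫ P.d a' b' ≫ eqToHom (by rw [hb]) := by
  subst ha hb; simp

/-- The cocycle-factoring property: every `f : P.X b ⟶ M` killed by `P.d a b` factors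
through `P.d b c`.  For `a = b+1`, `c = b-1` this says `Ext^1` of the `(b-2)`-nd cycle
module vanishes. -/
def W3 (P : ChainComplex (ModuleCat.{u} R) ℤ) (M : ModuleCat.{u} R) (a b c : ℤ) : Prop :=
  ∀ f : P.X b ⟶ M, P.d a b ≫ f = 0 → ∃ g : P.X c ⟶ M, f = P.d b c ≫ g

lemma W3_congr {P : ChainComplex (ModuleCat.{u} R) ℤ} {M : ModuleCat.{u} R}
    {a b c a' b' c' : ℤ} (ha : a = a') (hb : b = b') (hc : c = c')
    (h : W3 P M a b c) : W3 P M a' b' c' := by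
  subst ha hb hc; exact h

/-- Elementwise exactness in a three-term window. -/
def EAt3 (P : ChainComplex (ModuleCat.{u} R) ℤ) (a b c : ℤ) : Prop :=
  ∀ x : P.X b, P.d b c x = 0 → ∃ y : P.X a, P.d a b y = x

lemma EAt3_congr {P : ChainComplex (ModuleCat.{u} R) ℤ} {a b c a' c' : ℤ}
    (ha : a = a') (hc : c = c') (h : EAt3 P a b c) : EAt3 P a' b c' := by
  subst ha hc; exact h

lemma exactAt_iff_EAt3 (P : ChainComplex (ModuleCat.{u} R) ℤ) (b : ℤ) :
    P.ExactAt b ↔ EAt3 P (b+1) b (b-1) := by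
  rw [P.exactAt_iff' (b+1) b (b-1) (downZ_prev b) (downZ_next b)]
  exact (P.sc' (b+1) b (b-1)).moduleCat_exact_iff

lemma yoneda_exactAt_iff_W3 (P : ChainComplex (ModuleCat.{u} R) ℤ) (Q : ModuleCat.{u} R)
    (i : ℤ) :
    ((((preadditiveYoneda.obj Q).mapHomologicalComplex _).obj P.op).ExactAt i) ↔
      W3 P Q (i+1) i (i-1) := by
  set K := (((preadditiveYoneda.obj Q).mapHomologicalComplex _).obj P.op)
  rw [K.exactAt_iff' (i-1) i (i+1)
    (((ComplexShape.down ℤ).symm.prev_eq' (by simp)))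
    (((ComplexShape.down ℤ).symm.next_eq' (by simp)))]
  rw [ShortComplex.ab_exact_iff]
  constructor
  · intro h f hf
    obtain ⟨g, hg⟩ := h f hf
    exact ⟨g, hg.symm⟩
  · intro h f hf
    obtain ⟨g, hg⟩ := h f hf
    exact ⟨g, hg.symm⟩

/-! ### Shifted complexes and Gorenstein projectivity of all cycles -/

@[simps]
def shiftCx (P : ChainComplex (ModuleCat.{u} R) ℤ) (k : ℤ) :
    ChainComplex (ModuleCat.{u} R) ℤ where
  X i := P.X (i + k)
  d i j := P.d (i + k) (j + k)
  shape i j h := P.shape _ _ (by simp at h ⊢; omega)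
  d_comp_d' _ _ _ _ _ := P.d_comp_d _ _ _

noncomputable def shiftCyclesIso (P : ChainComplex (ModuleCat.{u} R) ℤ) (k : ℤ) :
    P.cycles k ≅ (shiftCx P k).cycles 0 where
  hom := (shiftCx P k).liftCycles (P.iCycles k ≫ eqToHom (by simp)) (-1)
    ((ComplexShape.down ℤ).next_eq' (by simp)) (by
      rw [shiftCx_d, d_congr P (show (0:ℤ)+k = k by omega) (show (-1:ℤ)+k = k-1 by omega)]
      erw [Category.assoc, eqToHom_trans_assoc, eqToHom_refl, Category.id_comp,
        HomologicalComplex.iCycles_d_assoc, zero_comp])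
  inv := P.liftCycles ((shiftCx P k).iCycles 0 ≫ eqToHom (by simp)) (k-1)
    ((ComplexShape.down ℤ).next_eq' (by simp)) (by
      rw [d_congr P (show k = (0:ℤ)+k by omega) (show k-1 = (-1:ℤ)+k by omega)]
      have := (shiftCx P k).iCycles_d 0 (-1)
      simp only [shiftCx_d] at this
      erw [Category.assoc, eqToHom_trans_assoc, eqToHom_refl, Category.id_comp,
        reassoc_of% this, zero_comp])
  hom_inv_id := by
    rw [← cancel_mono (P.iCycles k)]
    simp
  inv_hom_id := by
    rw [← cancel_mono ((shiftCx P k).iCycles 0)]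
    simp

lemma isTotallyAcyclic_shiftCx {P : ChainComplex (ModuleCat.{u} R) ℤ}
    (hP : IsTotallyAcyclic P) (k : ℤ) : IsTotallyAcyclic (shiftCx P k) := by
  obtain ⟨h1, h2, h3⟩ := hP
  refine ⟨fun i => h1 (i+k), fun i => ?_, fun Q hQ i => ?_⟩
  · rw [exactAt_iff_EAt3]
    have : EAt3 P (i+1+k) (i+k) (i-1+k) :=
      EAt3_congr (by omega) (by omega) ((exactAt_iff_EAt3 P (i+k)).1 (h2 (i+k)))
    exact this
  · rw [yoneda_exactAt_iff_W3]
    have : W3 P Q (i+1+k) (i+k) (i-1+k) :=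
      W3_congr (by omega) rfl (by omega) ((yoneda_exactAt_iff_W3 P Q (i+k)).1 (h3 Q hQ (i+k)))
    exact this

lemma isGP_cycles {P : ChainComplex (ModuleCat.{u} R) ℤ} (hP : IsTotallyAcyclic P) (k : ℤ) :
    IsGorensteinProjective (P.cycles k) :=
  ⟨shiftCx P k, isTotallyAcyclic_shiftCx hP k, ⟨shiftCyclesIso P k⟩⟩

/-! ### A projective resolution of each cycle module -/

@[simps]
def resCx (P : ChainComplex (ModuleCat.{u} R) ℤ) (k : ℤ) :
    ChainComplex (ModuleCat.{u} R) ℕ where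
  X n := P.X (n + (k+1))
  d n m := P.d (n + (k+1)) (m + (k+1))
  shape n m h := P.shape _ _ (by simp at h ⊢; omega)
  d_comp_d' _ _ _ _ _ := P.d_comp_d _ _ _

noncomputable def resAug (P : ChainComplex (ModuleCat.{u} R) ℤ) (k : ℤ) :
    (resCx P k).X 0 ⟶ P.cycles k :=
  eqToHom (show (resCx P k).X 0 = P.X (k+1) by simp) ≫ P.toCycles (k+1) k

lemma resAug_w (P : ChainComplex (ModuleCat.{u} R) ℤ) (k : ℤ) :
    (resCx P k).d 1 0 ≫ resAug P k = 0 := by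
  rw [← cancel_mono (P.iCycles k)]
  simp only [resAug, resCx_d, Category.assoc, HomologicalComplex.toCycles_i, zero_comp]
  rw [d_congr P (show ((1:ℕ):ℤ) + (k+1) = k+2 by omega) (show ((0:ℕ):ℤ) + (k+1) = k+1 by omega)]
  erw [Category.assoc, Category.assoc, Category.assoc, Category.assoc, HomologicalComplex.toCycles_i,
    eqToHom_trans_assoc, eqToHom_refl, Category.id_comp,
    HomologicalComplex.d_comp_d, comp_zero]

noncomputable def resOfTA {P : ChainComplex (ModuleCat.{u} R) ℤ}
    (h1 : ∀ i, Projective (P.X i)) (h2 : ∀ i, P.ExactAt i) (k : ℤ) :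
    ProjectiveResolution (P.cycles k) where
  complex := resCx P k
  projective n := h1 _
  π := (ChainComplex.toSingle₀Equiv _ _).symm ⟨resAug P k, resAug_w P k⟩
  quasiIso := ⟨fun n => by
    cases n with
    | zero =>
      rw [ChainComplex.quasiIsoAt₀_iff, ShortComplex.quasiIso_iff_of_zeros']
      rotate_left
      · exact P.shape _ _ (by simp)
      · rfl
      · rfl
      · have E1 : (P.sc' (k+2) (k+1) k).Exact :=
          (P.exactAt_iff' (k+2) (k+1) k (by rw [downZ_prev]; omega)
            (by rw [downZ_next]; omega)).1 (h2 (k+1))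
        have E2 : (ShortComplex.mk (P.d (k+2) (k+1)) (P.toCycles (k+1) k)
            (by simp)).Exact :=
          (@ShortComplex.exact_iff_of_epi_of_isIso_of_mono _ _ _
            (ShortComplex.mk (P.d (k+2) (k+1)) (P.toCycles (k+1) k) (by simp))
            (P.sc' (k+2) (k+1) k)
            { τ₁ := 𝟙 _, τ₂ := 𝟙 _, τ₃ := P.iCycles k,
              comm₁₂ := (Category.id_comp _).trans (Category.comp_id _).symm,
              comm₂₃ := (Category.id_comp _).trans (P.toCycles_i _ _).symm }
            (show Epi (𝟙 (P.X (k+2))) from inferInstance)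
            (show IsIso (𝟙 (P.X (k+1))) from inferInstance)
            (show Mono (P.iCycles k) from inferInstance)).2 E1
        have E3 : (ShortComplex.mk ((resCx P k).d 1 0) (resAug P k)
            (resAug_w P k)).Exact := by
          refine (ShortComplex.exact_iff_of_iso ?_).2 E2
          refine ShortComplex.isoMk (eqToIso (congrArg P.X (by push_cast; omega)))
            (eqToIso (congrArg P.X (by push_cast; omega))) (Iso.refl _) ?_ ?_
          · simp only [resCx_d]
            rw [d_congr P (show ((1:ℕ):ℤ) + (k+1) = k+2 by omega)
              (show ((0:ℕ):ℤ) + (k+1) = k+1 by omega)]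
            erw [eqToIso.hom, eqToIso.hom, Category.assoc, Category.assoc, eqToHom_trans,
              eqToHom_refl, Category.comp_id]
            rfl
          · simp [resAug]
            rfl
        have Epiπ : Epi (resAug P k) := by
          have E0 : (P.sc' (k+1) k (k-1)).Exact :=
            (P.exactAt_iff' (k+1) k (k-1) (downZ_prev k) (downZ_next k)).1 (h2 k)
          have h3 := E0.epi_toCycles
          have heq := P.toCycles_cyclesIsoSc'_hom (k+1) k (k-1) (downZ_prev k) (downZ_next k)
          have : P.toCycles (k+1) k = (P.sc' (k+1) k (k-1)).toCycles ≫
              (P.cyclesIsoSc' (k+1) k (k-1) (downZ_prev k) (downZ_next k)).inv := by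
            exact (Iso.eq_comp_inv _).2 heq
          rw [resAug, this]
          exact @epi_comp _ _ _ _ _ _ inferInstance _ (@epi_comp _ _ _ _ _ _ h3 _ inferInstance)
        refine (ShortComplex.exact_and_epi_g_iff_of_iso ?_).2 ⟨E3, Epiπ⟩
        refine ShortComplex.isoMk (Iso.refl _) (Iso.refl _) (Iso.refl _)
          (by exact (Category.id_comp _).trans (Category.comp_id _).symm) ?_
        dsimp
        refine (Category.id_comp _).trans (Eq.trans ?_ (Category.comp_id _).symm)
        exact (ChainComplex.toSingle₀Equiv_symm_apply_f_zero _ _).symm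
    | succ n =>
      rw [quasiIsoAt_iff_exactAt' _ _ (ChainComplex.exactAt_succ_single_obj _ n)]
      rw [(resCx P k).exactAt_iff' (n+2) (n+1) n
        ((ComplexShape.down ℕ).prev_eq' (by simp))
        ((ComplexShape.down ℕ).next_eq' (by simp))]
      rw [ShortComplex.moduleCat_exact_iff]
      have : EAt3 P (((n+2:ℕ):ℤ) + (k+1)) (((n+1:ℕ):ℤ) + (k+1)) ((n:ℤ) + (k+1)) :=
        EAt3_congr (by push_cast; omega) (by push_cast; omega)
          ((exactAt_iff_EAt3 P (((n+1:ℕ):ℤ) + (k+1))).1 (h2 _))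
      exact this⟩

/-! ### Subsingleton transfer and the bridge between `Ext` and `W3` -/

lemma subsingleton_iff_isZero {A : Type*} [Ring A] (M : ModuleCat A) :
    Subsingleton M ↔ IsZero M := by
  constructor
  · intro h; exact ModuleCat.isZero_of_subsingleton M
  · intro h
    have hz : ∀ x : M, x = 0 := fun x => by
      have h0 : (𝟙 M : M ⟶ M) = 0 := h.eq_of_src _ _
      calc x = (𝟙 M : M ⟶ M) x := rfl
        _ = (0 : M ⟶ M) x := by rw [h0]
        _ = 0 := rfl
    exact ⟨fun a b => by rw [hz a, hz b]⟩

lemma subsingleton_of_iso {A : Type*} [Ring A] {M N : ModuleCat A} (e : M ≅ N)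
    (h : Subsingleton M) : Subsingleton N := by
  rw [subsingleton_iff_isZero] at h ⊢
  exact h.of_iso e.symm

lemma extVanishes_of_iso {n : ℕ} {X Y M : ModuleCat.{u} R} (e : X ≅ Y)
    (h : extVanishes n Y M) : extVanishes n X M :=
  subsingleton_of_iso (((Ext ℤ (ModuleCat.{u} R) n).mapIso e.op).app M) h

lemma bridge {P : ChainComplex (ModuleCat.{u} R) ℤ}
    (h1 : ∀ i, Projective (P.X i)) (h2 : ∀ i, P.ExactAt i) (k : ℤ) (n : ℕ)
    (M : ModuleCat.{u} R) :
    extVanishes (n+1) (P.cycles k) M ↔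
      W3 P M (((n+2:ℕ):ℤ) + (k+1)) (((n+1:ℕ):ℤ) + (k+1)) (((n:ℕ):ℤ) + (k+1)) := by
  have e : ((Ext ℤ (ModuleCat.{u} R) (n+1)).obj (op (P.cycles k))).obj M ≅
      ((resCx P k).linearYonedaObj ℤ M).homology (n+1) :=
    (resOfTA h1 h2 k).isoExt (R := ℤ) (n+1) M
  set K := (resCx P k).linearYonedaObj ℤ M with hK
  constructor
  · intro h
    have hsub : Subsingleton (K.homology (n+1)) := subsingleton_of_iso e h
    rw [subsingleton_iff_isZero] at hsub
    rw [← K.exactAt_iff_isZero_homology] at hsub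
    rw [K.exactAt_iff' n (n+1) (n+2)
      ((ComplexShape.up ℕ).prev_eq' (upN_rel _ _ rfl))
      ((ComplexShape.up ℕ).next_eq' (upN_rel _ _ rfl))] at hsub
    rw [ShortComplex.moduleCat_exact_iff] at hsub
    intro f hf
    exact (hsub f hf).imp fun g hg => hg.symm
  · intro h
    refine subsingleton_of_iso e.symm ?_
    rw [subsingleton_iff_isZero, ← K.exactAt_iff_isZero_homology,
      K.exactAt_iff' n (n+1) (n+2)
        ((ComplexShape.up ℕ).prev_eq' (upN_rel _ _ rfl))
        ((ComplexShape.up ℕ).next_eq' (upN_rel _ _ rfl)),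
      ShortComplex.moduleCat_exact_iff]
    intro f hf
    exact (h f hf).imp fun g hg => hg.symm

lemma memGPperp_W3 {P : ChainComplex (ModuleCat.{u} R) ℤ} (hP : IsTotallyAcyclic P)
    {M : ModuleCat.{u} R} (hM : MemGPperp M) (a b c : ℤ) (hab : a = b+1) (hcb : c = b-1) :
    W3 P M a b c := by
  have hv : extVanishes 1 (P.cycles (b-2)) M := hM _ (isGP_cycles hP (b-2))
  have := (bridge hP.1 hP.2.1 (b-2) 0 M).1 hv
  exact W3_congr (by push_cast; omega) (by push_cast; omega) (by push_cast; omega) this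

/-! ### The three diagram chases -/

section Chase
variable {P : ChainComplex (ModuleCat.{u} R) ℤ} {S : ShortComplex (ModuleCat.{u} R)}
  (hS : S.ShortExact)
include hS

lemma ses_lift {A : ModuleCat.{u} R} (h : A ⟶ S.X₂) (hh : h ≫ S.g = 0) :
    ∃ l : A ⟶ S.X₁, l ≫ S.f = h := by
  have := hS.mono_f
  obtain ⟨l, hl⟩ := KernelFork.IsLimit.lift' hS.exact.fIsKernel h hh
  exact ⟨l, hl⟩

lemma chase₂ {a b c : ℤ} (pc : Projective (P.X c))
    (h1 : W3 P S.X₁ a b c) (h3 : W3 P S.X₃ a b c) : W3 P S.X₂ a b c := by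
  have := hS.mono_f
  have := hS.epi_g
  intro f hf
  obtain ⟨g'', hg''⟩ := h3 (f ≫ S.g) (by rw [← Category.assoc, hf, zero_comp])
  obtain ⟨gt, hgt⟩ : ∃ gt : P.X c ⟶ S.X₂, gt ≫ S.g = g'' :=
    ⟨Projective.factorThru g'' S.g, Projective.factorThru_comp _ _⟩
  obtain ⟨h, hh⟩ := ses_lift hS (f - P.d b c ≫ gt) (by
    simp only [Preadditive.sub_comp, Category.assoc, hgt, ← hg'', sub_self])
  have hcoc : P.d a b ≫ h = 0 := by
    rw [← cancel_mono S.f, Category.assoc, hh, zero_comp]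
    simp only [Preadditive.comp_sub, hf]
    rw [← Category.assoc, HomologicalComplex.d_comp_d, zero_comp]
    simp
  obtain ⟨h', hh'⟩ := h1 h hcoc
  refine ⟨gt + h' ≫ S.f, ?_⟩
  rw [Preadditive.comp_add, ← Category.assoc, ← hh', hh]
  abel

lemma chase₁ {z a b c : ℤ} (pb : Projective (P.X b))
    (h1 : W3 P S.X₁ z a b) (h2 : W3 P S.X₂ a b c) : W3 P S.X₃ a b c := by
  have := hS.mono_f
  have := hS.epi_g
  intro f'' hf''
  obtain ⟨f, hf⟩ : ∃ f : P.X b ⟶ S.X₂, f ≫ S.g = f'' :=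
    ⟨Projective.factorThru f'' S.g, Projective.factorThru_comp _ _⟩
  obtain ⟨h, hh⟩ := ses_lift hS (P.d a b ≫ f) (by rw [Category.assoc, hf, hf''])
  have hcoc : P.d z a ≫ h = 0 := by
    rw [← cancel_mono S.f, Category.assoc, hh, zero_comp, ← Category.assoc,
      HomologicalComplex.d_comp_d, zero_comp]
  obtain ⟨h', hh'⟩ := h1 h hcoc
  obtain ⟨g, hg⟩ := h2 (f - h' ≫ S.f) (by
    simp only [Preadditive.comp_sub, ← hh, hh']
    rw [← Category.assoc]
    simp)
  refine ⟨g ≫ S.g, ?_⟩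
  rw [← hf, ← Category.assoc, ← sub_eq_zero]
  have : f - h' ≫ S.f = P.d b c ≫ g := hg
  calc f ≫ S.g - (P.d b c ≫ g) ≫ S.g = (f - P.d b c ≫ g) ≫ S.g := by
        rw [Preadditive.sub_comp]
    _ = (h' ≫ S.f) ≫ S.g := by rw [← this, sub_sub_cancel]
    _ = 0 := by rw [Category.assoc, S.zero, comp_zero]

lemma chase₃ {a b c w : ℤ} (pw : Projective (P.X w))
    (h2 : W3 P S.X₂ a b c) (h3 : W3 P S.X₃ b c w) : W3 P S.X₁ a b c := by
  have := hS.mono_f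
  have := hS.epi_g
  intro f' hf'
  obtain ⟨g, hg⟩ := h2 (f' ≫ S.f) (by rw [← Category.assoc, hf', zero_comp])
  obtain ⟨u, hu⟩ := h3 (g ≫ S.g) (by
    rw [← Category.assoc, ← hg, Category.assoc, S.zero, comp_zero])
  obtain ⟨v, hv⟩ : ∃ v : P.X w ⟶ S.X₂, v ≫ S.g = u :=
    ⟨Projective.factorThru u S.g, Projective.factorThru_comp _ _⟩
  obtain ⟨l, hl⟩ := ses_lift hS (g - P.d c w ≫ v) (by
    simp only [Preadditive.sub_comp, Category.assoc, hv, ← hu, sub_self])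
  refine ⟨l, ?_⟩
  rw [← cancel_mono S.f, Category.assoc, hl]
  simp only [Preadditive.comp_sub, ← hg]
  rw [← Category.assoc, HomologicalComplex.d_comp_d, zero_comp]
  abel
end Chase

end Aux

/-- `GP^⊥` is thick: closed under direct summands, and satisfies two-out-of-three
for short exact sequences. -/
theorem gpPerp_thick :
    (∀ M M' : ModuleCat.{u} R, MemGPperp M →
      (∃ (i : M' ⟶ M) (p : M ⟶ M'), i ≫ p = 𝟙 M') → MemGPperp M') ∧
    (∀ S : ShortComplex (ModuleCat.{u} R), S.ShortExact →
      ((MemGPperp S.X₁ → MemGPperp S.X₂ → MemGPperp S.X₃) ∧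
       (MemGPperp S.X₁ → MemGPperp S.X₃ → MemGPperp S.X₂) ∧
       (MemGPperp S.X₂ → MemGPperp S.X₃ → MemGPperp S.X₁))) := by
  constructor
  · rintro M M' hM ⟨i, p, hip⟩ X hX
    have hsub := hM X hX
    set F := (Ext ℤ (ModuleCat.{u} R) 1).obj (op X) with hF
    have hcomp : F.map i ≫ F.map p = 𝟙 (F.obj M') := by
      rw [← F.map_comp, hip, F.map_id]
    refine ⟨fun x y => ?_⟩
    have hxy : F.map i x = F.map i y := Subsingleton.elim _ _
    have hx : F.map p (F.map i x) = x := by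
      have := congrArg (fun φ => φ x) hcomp
      simpa using this
    have hy : F.map p (F.map i y) = y := by
      have := congrArg (fun φ => φ y) hcomp
      simpa using this
    rw [← hx, ← hy, hxy]
  · intro S hS
    refine ⟨?_, ?_, ?_⟩
    · -- X₁, X₂ ∈ ⊥ ⇒ X₃ ∈ ⊥
      rintro hA hB X ⟨P, hP, ⟨e⟩⟩
      refine extVanishes_of_iso e ?_
      rw [bridge hP.1 hP.2.1 0 0]
      exact chase₁ hS (hP.1 _)
        (memGPperp_W3 hP hA (((2:ℕ):ℤ)+(0+1)+1) (((2:ℕ):ℤ)+(0+1)) (((1:ℕ):ℤ)+(0+1))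
          rfl (by push_cast; try omega))
        (memGPperp_W3 hP hB (((2:ℕ):ℤ)+(0+1)) (((1:ℕ):ℤ)+(0+1)) (((0:ℕ):ℤ)+(0+1))
          (by push_cast; try omega) (by push_cast; try omega))
    · -- X₁, X₃ ∈ ⊥ ⇒ X₂ ∈ ⊥
      rintro hA hB X ⟨P, hP, ⟨e⟩⟩
      refine extVanishes_of_iso e ?_
      rw [bridge hP.1 hP.2.1 0 0]
      exact chase₂ hS (hP.1 _)
        (memGPperp_W3 hP hA (((2:ℕ):ℤ)+(0+1)) (((1:ℕ):ℤ)+(0+1)) (((0:ℕ):ℤ)+(0+1))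
          (by push_cast; try omega) (by push_cast; try omega))
        (memGPperp_W3 hP hB (((2:ℕ):ℤ)+(0+1)) (((1:ℕ):ℤ)+(0+1)) (((0:ℕ):ℤ)+(0+1))
          (by push_cast; try omega) (by push_cast; try omega))
    · -- X₂, X₃ ∈ ⊥ ⇒ X₁ ∈ ⊥
      rintro hA hB X ⟨P, hP, ⟨e⟩⟩
      refine extVanishes_of_iso e ?_
      rw [bridge hP.1 hP.2.1 0 0]
      exact chase₃ hS (hP.1 _)
        (memGPperp_W3 hP hA (((2:ℕ):ℤ)+(0+1)) (((1:ℕ):ℤ)+(0+1)) (((0:ℕ):ℤ)+(0+1))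
          (by push_cast; try omega) (by push_cast; try omega))
        (memGPperp_W3 hP hB (((1:ℕ):ℤ)+(0+1)) (((0:ℕ):ℤ)+(0+1)) ((((0:ℕ):ℤ)+(0+1))-1)
          (by push_cast; try omega) rfl)
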